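/- Let p be a prime number, let u be a unit of ℤ_p whose residue class modulo p generates (ℤ/pℤ)ˣ, and let i and j be integers such that i − j is not divisible by p − 1. Let M be a finitely generated ℤ_p-module and N any ℤ_p-module. Then every short exact sequence of ℤ_p[T,T⁻¹]-modules 0 → N(j) → E → M(i) → 0 splits: if f : N(j) → E is an injective ℤ_p[T,T⁻¹]-linear map and g : E → M(i) is a surjective ℤ_p[T,T⁻¹]-linear map with image of f equal to the kernel of g, then g admits a ℤ_p[T,T⁻¹]-linear section. -/

import Mathlib

/-- Evaluation of a Laurent polynomial over `ℤ_p` at a unit `c ∈ ℤ_pˣ`: the `ℤ_p`-algebra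
homomorphism `ℤ_p[T,T⁻¹] → ℤ_p` sending `T` to `c`. -/
noncomputable def LaurentPolynomial.evalUnit (p : ℕ) [Fact p.Prime] (c : ℤ_[p]ˣ) :
    LaurentPolynomial ℤ_[p] →+* ℤ_[p] :=
  ((AddMonoidAlgebra.lift ℤ_[p] ℤ_[p] ℤ)
    ((Units.coeHom ℤ_[p]).comp (zpowersHom ℤ_[p]ˣ c))).toRingHom

/-- Given a `ℤ_p`-module `N` and a unit `c ∈ ℤ_pˣ`, this is the `ℤ_p[T,T⁻¹]`-module structure
on `N` obtained by restriction of scalars along evaluation at `c`, i.e. `T` acts as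
multiplication by `c`.  Taking `c = u ^ i` yields the module denoted `N(i)` in the paper. -/
noncomputable def twistedModule (p : ℕ) [Fact p.Prime] (N : Type*) [AddCommGroup N]
    [Module ℤ_[p] N] (c : ℤ_[p]ˣ) : Module (LaurentPolynomial ℤ_[p]) N :=
  Module.compHom N (LaurentPolynomial.evalUnit p c)

open LaurentPolynomial in
lemma evalUnit_T (p : ℕ) [Fact p.Prime] (c : ℤ_[p]ˣ) (n : ℤ) :
    evalUnit p c (T n) = ((c ^ n : ℤ_[p]ˣ) : ℤ_[p]) := by
  rw [evalUnit, T, AlgHom.toRingHom_eq_coe, RingHom.coe_coe, AddMonoidAlgebra.lift_single]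
  simp

open LaurentPolynomial in
lemma evalUnit_C (p : ℕ) [Fact p.Prime] (c : ℤ_[p]ˣ) (a : ℤ_[p]) :
    evalUnit p c (C a) = a := by
  have h : (C a : LaurentPolynomial ℤ_[p]) = AddMonoidAlgebra.single 0 a := rfl
  rw [evalUnit, AlgHom.toRingHom_eq_coe, RingHom.coe_coe, h, AddMonoidAlgebra.lift_single]
  simp

open LaurentPolynomial in
theorem aux_splits (p : ℕ) [Fact p.Prime] (a b : ℤ_[p]ˣ)
    (hab : IsUnit ((b : ℤ_[p]) - (a : ℤ_[p])))
    (M : Type) [AddCommGroup M] [Module ℤ_[p] M]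
    (N : Type) [AddCommGroup N] [Module ℤ_[p] N]
    (E : Type) [AddCommGroup E] [Module (LaurentPolynomial ℤ_[p]) E]
    [instM : Module (LaurentPolynomial ℤ_[p]) M]
    [instN : Module (LaurentPolynomial ℤ_[p]) N]
    (hM : ∀ (r : LaurentPolynomial ℤ_[p]) (m : M), r • m = evalUnit p a r • m)
    (hN : ∀ (r : LaurentPolynomial ℤ_[p]) (n : N), r • n = evalUnit p b r • n)
    (f : N →ₗ[LaurentPolynomial ℤ_[p]] E) (g : E →ₗ[LaurentPolynomial ℤ_[p]] M)
    (hfinj : Function.Injective f) (hgsurj : Function.Surjective g)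
    (hfg : LinearMap.range f = LinearMap.ker g) :
    ∃ s : M →ₗ[LaurentPolynomial ℤ_[p]] E, g.comp s = LinearMap.id := by
  set R := LaurentPolynomial ℤ_[p]
  obtain ⟨c, hc⟩ := hab
  set r0 : R := T 1 - C (a : ℤ_[p]) with hr0
  have hev_a : evalUnit p a r0 = 0 := by
    rw [hr0, map_sub, evalUnit_T, evalUnit_C, zpow_one, sub_self]
  have hev_b : evalUnit p b r0 = (b : ℤ_[p]) - (a : ℤ_[p]) := by
    rw [hr0, map_sub, evalUnit_T, evalUnit_C, zpow_one]
  -- the multiplication-by-r0 map on E lands in ker g = range f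
  set φ : E →ₗ[R] E := LinearMap.lsmul R E r0 with hφ
  have hφmem : ∀ e : E, φ e ∈ LinearMap.range f := by
    intro e
    rw [hfg, LinearMap.mem_ker, hφ, LinearMap.lsmul_apply, map_smul, hM, hev_a, zero_smul]
  set φ' : E →ₗ[R] LinearMap.range f := φ.codRestrict (LinearMap.range f) hφmem with hφ'
  set eN : N ≃ₗ[R] LinearMap.range f := LinearEquiv.ofInjective f hfinj with heN
  set π0 : E →ₗ[R] N := (eN.symm : LinearMap.range f →ₗ[R] N).comp φ' with hπ0
  set π : E →ₗ[R] N := (C ((c⁻¹ : ℤ_[p]ˣ) : ℤ_[p]) : R) • π0 with hπ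
  have hπf : ∀ n : N, π (f n) = n := by
    intro n
    have h1 : φ (f n) = f (((b : ℤ_[p]) - (a : ℤ_[p])) • n) := by
      rw [hφ, LinearMap.lsmul_apply, ← map_smul, hN, hev_b]
    have h2 : π0 (f n) = ((b : ℤ_[p]) - (a : ℤ_[p])) • n := by
      rw [hπ0, LinearMap.comp_apply]
      apply eN.injective
      simp only [LinearEquiv.coe_coe, LinearEquiv.apply_symm_apply]
      ext
      simp only [hφ', LinearMap.codRestrict_apply, heN, LinearEquiv.ofInjective_apply]
      exact h1
    rw [hπ, LinearMap.smul_apply, h2, hN, evalUnit_C, ← hc, smul_smul, Units.inv_mul, one_smul]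
  set q : E →ₗ[R] E := LinearMap.id - f.comp π with hq
  have hker : LinearMap.ker g ≤ LinearMap.ker q := by
    intro e he
    rw [← hfg] at he
    obtain ⟨n, rfl⟩ := he
    rw [LinearMap.mem_ker, hq, LinearMap.sub_apply, LinearMap.id_apply, LinearMap.comp_apply,
      hπf, sub_self]
  set s0 : (E ⧸ LinearMap.ker g) →ₗ[R] E := (LinearMap.ker g).liftQ q hker with hs0
  set eq : (E ⧸ LinearMap.ker g) ≃ₗ[R] M := g.quotKerEquivOfSurjective hgsurj with heq
  refine ⟨s0.comp (eq.symm : M →ₗ[R] (E ⧸ LinearMap.ker g)), ?_⟩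
  apply LinearMap.ext
  intro m
  obtain ⟨e, rfl⟩ := hgsurj m
  have h3 : eq.symm (g e) = Submodule.Quotient.mk e := by
    apply eq.injective
    rw [LinearEquiv.apply_symm_apply]
    rfl
  have h4 : g (f (π e)) = 0 := by
    have : f (π e) ∈ LinearMap.ker g := hfg ▸ LinearMap.mem_range_self f (π e)
    rwa [LinearMap.mem_ker] at this
  rw [LinearMap.comp_apply, LinearMap.comp_apply]
  simp only [LinearEquiv.coe_coe]
  rw [h3]
  show g (s0 (Submodule.Quotient.mk e)) = g e
  rw [hs0, Submodule.liftQ_apply, hq, LinearMap.sub_apply, LinearMap.id_apply,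
    LinearMap.comp_apply, map_sub, h4, sub_zero]

lemma unit_of_not_dvd (p : ℕ) [Fact p.Prime] (u : ℤ_[p]ˣ)
    (hu : ∀ g : (ZMod p)ˣ,
      g ∈ Subgroup.zpowers (Units.map (PadicInt.toZMod (p := p)).toMonoidHom u))
    (i j : ℤ) (hij : ¬ ((p : ℤ) - 1) ∣ (i - j)) :
    IsUnit (((u ^ j : ℤ_[p]ˣ) : ℤ_[p]) - ((u ^ i : ℤ_[p]ˣ) : ℤ_[p])) := by
  set g0 : (ZMod p)ˣ := Units.map (PadicInt.toZMod (p := p)).toMonoidHom u with hg0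
  have horder : orderOf g0 = p - 1 := by
    rw [orderOf_eq_card_of_forall_mem_zpowers hu, Nat.card_eq_fintype_card, ZMod.card_units]
  by_contra h
  apply hij
  have hmem : ((u ^ j : ℤ_[p]ˣ) : ℤ_[p]) - ((u ^ i : ℤ_[p]ˣ) : ℤ_[p]) ∈
      IsLocalRing.maximalIdeal ℤ_[p] := by
    rwa [IsLocalRing.mem_maximalIdeal, mem_nonunits_iff]
  rw [← PadicInt.ker_toZMod, RingHom.mem_ker, map_sub, sub_eq_zero] at hmem
  have hj : PadicInt.toZMod ((u ^ j : ℤ_[p]ˣ) : ℤ_[p]) = ((g0 ^ j : (ZMod p)ˣ) : ZMod p) := by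
    rw [hg0, ← map_zpow]
    rfl
  have hi : PadicInt.toZMod ((u ^ i : ℤ_[p]ˣ) : ℤ_[p]) = ((g0 ^ i : (ZMod p)ˣ) : ZMod p) := by
    rw [hg0, ← map_zpow]
    rfl
  rw [hj, hi] at hmem
  have hunits : g0 ^ j = g0 ^ i := Units.ext hmem
  have h1 : g0 ^ (i - j) = 1 := by
    rw [zpow_sub, hunits, mul_inv_cancel]
  have := orderOf_dvd_iff_zpow_eq_one.mpr h1
  rwa [horder, Nat.cast_sub (Fact.out : p.Prime).one_le, Nat.cast_one] at this

/-- Let `p` be a prime, `u` a unit of `ℤ_p` whose residue modulo `p` generates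
`(ℤ/pℤ)ˣ`, and `i, j` integers with `i - j` not divisible by `p - 1`.  Let `M` be a finitely
generated `ℤ_p`-module and `N` any `ℤ_p`-module.  Every short exact sequence of
`ℤ_p[T,T⁻¹]`-modules `0 → N(j) → E → M(i) → 0` splits. -/
theorem twisted_ses_splits (p : ℕ) [Fact p.Prime] (u : ℤ_[p]ˣ)
    (hu : ∀ g : (ZMod p)ˣ,
      g ∈ Subgroup.zpowers (Units.map (PadicInt.toZMod (p := p)).toMonoidHom u))
    (i j : ℤ) (hij : ¬ ((p : ℤ) - 1) ∣ (i - j))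
    (M : Type) [AddCommGroup M] [Module ℤ_[p] M] [Module.Finite ℤ_[p] M]
    (N : Type) [AddCommGroup N] [Module ℤ_[p] N]
    (E : Type) [AddCommGroup E] [Module (LaurentPolynomial ℤ_[p]) E] :
    letI : Module (LaurentPolynomial ℤ_[p]) M := twistedModule p M (u ^ i)
    letI : Module (LaurentPolynomial ℤ_[p]) N := twistedModule p N (u ^ j)
    ∀ (f : N →ₗ[LaurentPolynomial ℤ_[p]] E) (g : E →ₗ[LaurentPolynomial ℤ_[p]] M),
      Function.Injective f → Function.Surjective g →
      LinearMap.range f = LinearMap.ker g →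
      ∃ s : M →ₗ[LaurentPolynomial ℤ_[p]] E, g.comp s = LinearMap.id := by
  intro f g hfinj hgsurj hfg
  exact aux_splits p (u ^ i) (u ^ j) (unit_of_not_dvd p u hu i j hij) M N E
    (instM := twistedModule p M (u ^ i)) (instN := twistedModule p N (u ^ j))
    (fun r m => rfl) (fun r n => rfl) f g hfinj hgsurj hfg
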